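/- Let n ≥ 1, let A, B ∈ ℝ^{n×n} both be Anti-Monge matrices, and let 0 ≤ k ≤ n. Then the pair (rev, rev), where rev(i) = n+1−i, is an optimal solution of RecovAP: it is feasible (it agrees on all n ≥ k indices), and for every feasible pair (σ, π) of permutations (i.e., |{i : σ(i) = π(i)}| ≥ k) one has ∑_{i=1}^{n} A_{i,n+1−i} + ∑_{i=1}^{n} B_{i,n+1−i} ≤ ∑_{i=1}^{n} A_{i,σ(i)} + ∑_{i=1}^{n} B_{i,π(i)}. -/

import Mathlib

open Finset

private def ascSet {n : ℕ} (σ : Equiv.Perm (Fin n)) : Finset (Fin n × Fin n) :=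
  Finset.univ.filter fun p => p.1 < p.2 ∧ σ p.1 < σ p.2

private lemma rev_min_aux {n : ℕ} (A : Fin n → Fin n → ℝ)
    (hA : ∀ i k j l : Fin n, i < k → j < l → A i l + A k j ≤ A i j + A k l) :
    ∀ m : ℕ, ∀ σ : Equiv.Perm (Fin n), (ascSet σ).card ≤ m →
      (∑ i, A i i.rev) ≤ ∑ i, A i (σ i) := by
  intro m
  induction m with
  | zero =>
    intro σ hσ
    -- no ascents: σ is strictly antitone, hence σ = rev
    have hasc : ∀ a b : Fin n, a < b → ¬ σ a < σ b := by
      intro a b hab hlt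
      have : (a, b) ∈ ascSet σ := by
        simp [ascSet, hab, hlt]
      have := Finset.card_pos.mpr ⟨_, this⟩
      omega
    have hanti : StrictAnti σ := by
      intro a b hab
      rcases lt_trichotomy (σ a) (σ b) with h | h | h
      · exact absurd h (hasc a b hab)
      · exact absurd (σ.injective h) (ne_of_lt hab)
      · exact h
    have hmono : StrictMono (fun i : Fin n => σ i.rev) := by
      intro a b hab
      exact hanti (Fin.rev_lt_rev.mpr hab)
    have hrange : Set.range (fun i : Fin n => σ i.rev) = Set.range (id : Fin n → Fin n) := by
      have hs : Function.Surjective (fun i : Fin n => σ i.rev) := fun y =>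
        ⟨(σ.symm y).rev, by simp [Fin.rev_rev]⟩
      rw [hs.range_eq, Set.range_id]
    have heq : (fun i : Fin n => σ i.rev) = id := (StrictMono.range_inj hmono strictMono_id).mp hrange
    have hσrev : ∀ i : Fin n, σ i = i.rev := by
      intro i
      have := congrFun heq i.rev
      simpa [Fin.rev_rev] using this
    apply le_of_eq
    exact Finset.sum_congr rfl fun i _ => by rw [hσrev i]
  | succ m ih =>
    intro σ hσ
    by_cases h0 : (ascSet σ).card = 0
    · exact ih σ (by omega)
    -- there is an ascent, hence an adjacent ascent
    have hassent : ∃ a b : Fin n, a < b ∧ σ a < σ b := by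
      rcases Finset.card_pos.mp (Nat.pos_of_ne_zero h0) with ⟨p, hp⟩
      simp only [ascSet, Finset.mem_filter] at hp
      exact ⟨p.1, p.2, hp.2.1, hp.2.2⟩
    have hadj : ∃ j j' : Fin n, j < j' ∧ (j : ℕ) + 1 = (j' : ℕ) ∧ σ j < σ j' := by
      by_contra hc
      push_neg at hc
      -- then all adjacent pairs descend, so σ is strictly antitone, contradiction
      rcases hassent with ⟨a, b, hab, hsab⟩
      obtain ⟨n', rfl⟩ : ∃ n', n = n' + 1 := ⟨n - 1, by have := b.2; omega⟩
      have hanti : StrictAnti (⇑σ) := by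
        rw [Fin.strictAnti_iff_succ_lt]
        intro i
        have h1 : i.castSucc < i.succ := Fin.castSucc_lt_succ
        have h2 : ((i.castSucc : Fin (n'+1)) : ℕ) + 1 = (i.succ : ℕ) := by simp
        have := hc i.castSucc i.succ h1 h2
        rcases lt_trichotomy (σ i.succ) (σ i.castSucc) with h | h | h
        · exact h
        · exact absurd (σ.injective h) (ne_of_lt h1).symm
        · exact absurd h (not_lt.mpr this)
      exact absurd hsab (not_lt.mpr (hanti hab).le)
    rcases hadj with ⟨j, j', hjj', hadd, hasc⟩
    set s : Equiv.Perm (Fin n) := Equiv.swap j j' with hs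
    set τ : Equiv.Perm (Fin n) := s.trans σ with hτ
    have hτj : τ j = σ j' := by simp [hτ, hs]
    have hτj' : τ j' = σ j := by simp [hτ, hs]
    have hτo : ∀ i : Fin n, i ≠ j → i ≠ j' → τ i = σ i := by
      intro i h1 h2
      simp [hτ, hs, Equiv.swap_apply_of_ne_of_ne h1 h2]
    -- ascent count decreases
    have hcard : (ascSet τ).card < (ascSet σ).card := by
      have hmaps : ∀ p ∈ ascSet τ, (s p.1, s p.2) ∈ (ascSet σ).erase (j, j') := by
        rintro ⟨a, b⟩ hp
        simp only [ascSet, Finset.mem_filter, Finset.mem_univ, true_and] at hp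
        obtain ⟨hab, hsab⟩ := hp
        have hne : ¬(a = j ∧ b = j') := by
          rintro ⟨rfl, rfl⟩
          rw [hτj, hτj'] at hsab
          exact absurd hasc (not_lt.mpr hsab.le)
        have hslt : s a < s b := by
          have habv : (a : ℕ) < (b : ℕ) := hab
          rw [Fin.lt_def]
          rcases eq_or_ne a j with heq | haj
          · have hav : (a : ℕ) = (j : ℕ) := congrArg Fin.val heq
            have hbj' : b ≠ j' := fun h => hne ⟨heq, h⟩
            have hbj : b ≠ j := by
              intro h; rw [heq, h] at hab; exact lt_irrefl _ hab
            have hbv : (b : ℕ) ≠ (j' : ℕ) := fun h => hbj' (Fin.ext h)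
            rw [heq, Equiv.swap_apply_left, Equiv.swap_apply_of_ne_of_ne hbj hbj']
            omega
          · rcases eq_or_ne a j' with heq' | haj'
            · have hav : (a : ℕ) = (j' : ℕ) := congrArg Fin.val heq'
              have hbj' : b ≠ j' := by
                intro h; rw [heq', h] at hab; exact lt_irrefl _ hab
              have hbj : b ≠ j := by
                intro h
                have hbv : (b : ℕ) = (j : ℕ) := congrArg Fin.val h
                omega
              rw [heq', Equiv.swap_apply_right, Equiv.swap_apply_of_ne_of_ne hbj hbj']
              omega
            · rw [Equiv.swap_apply_of_ne_of_ne haj haj']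
              rcases eq_or_ne b j with heqb | hbj
              · have hbv : (b : ℕ) = (j : ℕ) := congrArg Fin.val heqb
                rw [heqb, Equiv.swap_apply_left]
                omega
              · rcases eq_or_ne b j' with heqb' | hbj'
                · have hbv : (b : ℕ) = (j' : ℕ) := congrArg Fin.val heqb'
                  have hav : (a : ℕ) ≠ (j : ℕ) := fun h => haj (Fin.ext h)
                  rw [heqb', Equiv.swap_apply_right]
                  omega
                · rw [Equiv.swap_apply_of_ne_of_ne hbj hbj']
                  exact habv
        have hmem : (s a, s b) ∈ ascSet σ := by
          simp only [ascSet, Finset.mem_filter, Finset.mem_univ, true_and]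
          refine ⟨hslt, ?_⟩
          have h1 : σ (s a) = τ a := by simp [hτ]
          have h2 : σ (s b) = τ b := by simp [hτ]
          rw [h1, h2]; exact hsab
        refine Finset.mem_erase.mpr ⟨?_, hmem⟩
        intro hcontra
        have h1 : s a = j := (Prod.mk.injEq _ _ _ _).mp hcontra |>.1
        have h2 : s b = j' := (Prod.mk.injEq _ _ _ _).mp hcontra |>.2
        have ha : a = j' := by
          have := congrArg s h1
          simpa [hs] using this
        have hb : b = j := by
          have := congrArg s h2
          simpa [hs] using this
        rw [ha, hb] at hab
        exact absurd hab (not_lt.mpr hjj'.le)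
      have hinj : Set.InjOn (fun p : Fin n × Fin n => (s p.1, s p.2)) (ascSet τ) := by
        rintro ⟨a, b⟩ _ ⟨c, d⟩ _ h
        simp only [Prod.mk.injEq] at h
        exact Prod.ext (s.injective h.1) (s.injective h.2)
      have h1 : (ascSet τ).card ≤ ((ascSet σ).erase (j, j')).card :=
        Finset.card_le_card_of_injOn _ hmaps hinj
      have h2 : (j, j') ∈ ascSet σ := by simp [ascSet, hjj', hasc]
      have h3 := Finset.card_erase_of_mem h2
      have h4 := Finset.card_pos.mpr ⟨_, h2⟩
      omega
    have hIH := ih τ (by omega)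
    refine hIH.trans ?_
    -- cost of τ ≤ cost of σ
    have hne : j ≠ j' := ne_of_lt hjj'
    have split : ∀ f : Fin n → ℝ, ∑ i, f i = f j + (f j' + ∑ i ∈ (Finset.univ.erase j).erase j', f i) := by
      intro f
      rw [Finset.add_sum_erase _ f (Finset.mem_erase.mpr ⟨Ne.symm hne, Finset.mem_univ j'⟩),
        Finset.add_sum_erase _ f (Finset.mem_univ j)]
    rw [split (fun i => A i (τ i)), split (fun i => A i (σ i))]
    have hrest : ∑ i ∈ (Finset.univ.erase j).erase j', A i (τ i)
        = ∑ i ∈ (Finset.univ.erase j).erase j', A i (σ i) := by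
      refine Finset.sum_congr rfl fun i hi => ?_
      simp only [Finset.mem_erase] at hi
      rw [hτo i hi.2.1 hi.1]
    rw [hrest, hτj, hτj']
    have := hA j j' (σ j) (σ j') hjj' hasc
    linarith

/-- **Both cost matrices Anti-Monge: `(rev, rev)` solves RecovAP.**
If `A` and `B` are Anti-Monge matrices and `0 ≤ k ≤ n`, then the pair consisting of the
anti-diagonal permutation `rev : i ↦ n+1-i` (here `Fin.rev` in 0-based indexing) taken twice is
feasible (it agrees on all `n ≥ k` indices) and its cost is at most the cost of every
feasible pair `(σ, π)`, i.e. every pair agreeing on at least `k` indices. -/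
theorem recovAP_antiMonge_antiMonge_rev_optimal (n k : ℕ) (hn : 1 ≤ n) (hk : k ≤ n)
    (A B : Fin n → Fin n → ℝ)
    (hA : ∀ i k j l : Fin n, i < k → j < l → A i l + A k j ≤ A i j + A k l)
    (hB : ∀ i k j l : Fin n, i < k → j < l → B i l + B k j ≤ B i j + B k l) :
    k ≤ (Finset.univ.filter fun i : Fin n => Fin.rev i = Fin.rev i).card ∧
    ∀ σ π : Equiv.Perm (Fin n),
      k ≤ (Finset.univ.filter fun i : Fin n => σ i = π i).card →
      (∑ i, A i i.rev) + (∑ i, B i i.rev) ≤ (∑ i, A i (σ i)) + (∑ i, B i (π i)) := by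
  constructor
  · simpa using hk
  · intro σ π _
    have h1 := rev_min_aux A hA (ascSet σ).card σ le_rfl
    have h2 := rev_min_aux B hB (ascSet π).card π le_rfl
    linarith
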